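/- In the Lax–Friedrichs scheme for Burgers derived from the aggregation scheme, ∂ₓSᵢⁿ⁺¹ = ∂ₓSᵢⁿ(1 - λc) + (λc/2)(∂ₓS_{i-1}ⁿ + ∂ₓS_{i+1}ⁿ) - (λ/4)(A(∂ₓS_{i+1}ⁿ) - A(∂ₓS_{i-1}ⁿ)): if the aggregation scheme relations ρ_{i+1/2}ⁿ = -(∂ₓS_{i+1}ⁿ - ∂ₓSᵢⁿ)/δx, J_{i+1/2}ⁿ = -(A(∂ₓS_{i+1}ⁿ) - A(∂ₓSᵢⁿ))/δx, ρ_{i+1/2}ⁿ⁺¹ = ρ_{i+1/2}ⁿ(1-λc) + (λc/2)(ρ_{i-1/2}ⁿ + ρ_{i+3/2}ⁿ) + (λ/4)(J_{i-1/2}ⁿ - J_{i+3/2}ⁿ) hold, with boundary condition ∂ₓS₀ⁿ = 0 for all n, then summing over cells yields the displayed Burgers scheme update. -/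

import Mathlib

theorem stmt_18 (A : ℝ → ℝ) (lam c δx : ℝ) (hδx : 0 < δx)
    (dS dS' ρh ρh' Jh : ℤ → ℝ)
    (hρ : ∀ i : ℤ, ρh i = -(dS (i + 1) - dS i) / δx)
    (hρ' : ∀ i : ℤ, ρh' i = -(dS' (i + 1) - dS' i) / δx)
    (hJ : ∀ i : ℤ, Jh i = -(A (dS (i + 1)) - A (dS i)) / δx)
    (hupd : ∀ i : ℤ, ρh' i = ρh i * (1 - lam * c)
      + lam * c / 2 * (ρh (i - 1) + ρh (i + 1))
      + lam / 4 * (Jh (i - 1) - Jh (i + 1)))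
    (hsupp : ∀ k : ℤ, k ≤ 0 → ρh k = 0)
    (hdS0 : dS 0 = 0) (hdS'0 : dS' 0 = 0) :
    ∀ i : ℤ, 1 ≤ i →
      dS' i = dS i * (1 - lam * c) + lam * c / 2 * (dS (i - 1) + dS (i + 1))
        - lam / 4 * (A (dS (i + 1)) - A (dS (i - 1))) := by
  have hδ : δx ≠ 0 := hδx.ne'
  have hconst : ∀ k : ℤ, k ≤ 0 → dS (k + 1) = dS k := by
    intro k hk
    have h := hsupp k hk
    rw [hρ] at h
    field_simp at h
    linarith
  have hdS1 : dS 1 = 0 := by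
    have := hconst 0 le_rfl; simpa [hdS0] using this
  have hdSm1 : dS (-1) = 0 := by
    have := hconst (-1) (by norm_num)
    norm_num at this
    rw [← this, hdS0]
  refine Int.le_induction ?_ ?_
  ·
    have h := hupd 0
    simp only [hρ', hρ, hJ] at h
    norm_num [hdS0, hdS'0, hdSm1, hdS1] at h ⊢
    field_simp at h
    have h8 : (8 : ℝ) * δx ^ 2 ≠ 0 := by positivity
    refine mul_right_cancel₀ h8 ?_
    linear_combination -δx ^ 2 * h
  · intro n hn ih
    have h := hupd n
    simp only [hρ', hρ, hJ] at h
    have e1 : n - 1 + 1 = n := by ring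
    have e2 : n + 1 + 1 = n + 2 := by ring
    rw [e1, e2] at h
    have e3 : n + 1 - 1 = n := by ring
    rw [e3, e2]
    field_simp at h
    have h8 : (8 : ℝ) * δx ^ 3 ≠ 0 := by positivity
    refine mul_right_cancel₀ h8 ?_
    linear_combination 8 * δx ^ 3 * ih - δx ^ 3 * h
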